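/- Let n be a finite type, H : Matrix n n ℂ a fixed matrix, and ρ₀ : Matrix n n ℂ. Define U(t) := exp(-i t H) and ρ(t) := U(t) * ρ₀ * (U(t))ᴴ, where ᴴ denotes the conjugate transpose. If H is Hermitian, then ρ(0) = ρ₀ and for every t ∈ ℝ, HasDerivAt ρ (-i • (H * ρ(t) - ρ(t) * H)) t; i.e. ρ solves the von Neumann equation ρ' = -i [H, ρ]. -/

import Mathlib

open scoped Matrix

section AuxSection

attribute [local instance] Matrix.linftyOpNormedRing Matrix.linftyOpNormedAlgebra

theorem aux_comp_ofReal {E : Type*} [NormedAddCommGroup E] [NormedSpace ℂ E]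
    {e : ℂ → E} {e' : E} {z : ℝ} (h : HasDerivAt e e' ↑z) :
    HasDerivAt (fun y : ℝ => e ↑y) e' z := by
  simpa [Function.comp_def] using ((h.hasFDerivAt.restrictScalars ℝ).comp z
    Complex.ofRealCLM.hasFDerivAt).hasDerivAt

theorem aux_deriv_slope {n : Type*} [Fintype n] [DecidableEq n]
    (A B ρ₀ : Matrix n n ℂ) (t : ℝ) :
    Filter.Tendsto
      (slope (fun s : ℝ => NormedSpace.exp ((s : ℂ) • A) * ρ₀ *
        NormedSpace.exp ((s : ℂ) • B)) t)
      (nhdsWithin t {t}ᶜ)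
      (nhds (A * (NormedSpace.exp ((t : ℂ) • A) * ρ₀ * NormedSpace.exp ((t : ℂ) • B))
        + (NormedSpace.exp ((t : ℂ) • A) * ρ₀ * NormedSpace.exp ((t : ℂ) • B)) * B)) := by
  refine hasDerivAt_iff_tendsto_slope.mp ?_
  have hf : HasDerivAt (fun s : ℝ => NormedSpace.exp ((s : ℂ) • A))
      (A * NormedSpace.exp ((t : ℂ) • A)) t :=
    aux_comp_ofReal (hasDerivAt_exp_smul_const' (𝕂 := ℂ) A (t : ℂ))
  have hg : HasDerivAt (fun s : ℝ => NormedSpace.exp ((s : ℂ) • B))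
      (NormedSpace.exp ((t : ℂ) • B) * B) t :=
    aux_comp_ofReal (hasDerivAt_exp_smul_const (𝕂 := ℂ) B (t : ℂ))
  have h := (hf.mul_const ρ₀).mul hg
  convert h using 1
  · rfl
  · rfl
  simp only [Matrix.mul_assoc]

end AuxSection

attribute [local instance] Matrix.normedAddCommGroup Matrix.normedSpace

/-- With `U(t) = exp(-i t H)` and `ρ(t) = U(t) ρ₀ U(t)ᴴ` for a Hermitian `H`, we have
`ρ(0) = ρ₀` and `ρ` solves the von Neumann equation `ρ' = -i [H, ρ]`. -/
theorem stmt_1 {n : Type*} [Fintype n] [DecidableEq n]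
    (H ρ₀ : Matrix n n ℂ) (hH : H.IsHermitian)
    (U : ℝ → Matrix n n ℂ)
    (hU : ∀ t : ℝ, U t = NormedSpace.exp ((-Complex.I * (t : ℂ)) • H))
    (ρ : ℝ → Matrix n n ℂ)
    (hρ : ∀ t : ℝ, ρ t = U t * ρ₀ * (U t)ᴴ) :
    ρ 0 = ρ₀ ∧ ∀ t : ℝ, HasDerivAt ρ ((-Complex.I) • (H * ρ t - ρ t * H)) t := by
  have hU' : ∀ t : ℝ, U t = NormedSpace.exp ((t : ℂ) • ((-Complex.I) • H)) := by
    intro t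
    rw [hU t, smul_smul, mul_comm]
  have hUH : ∀ t : ℝ, (U t)ᴴ = NormedSpace.exp ((t : ℂ) • (Complex.I • H)) := by
    intro t
    rw [hU' t, ← Matrix.exp_conjTranspose]
    congr 1
    rw [Matrix.conjTranspose_smul, Matrix.conjTranspose_smul, hH.eq]
    simp [smul_smul]
  have hρ' : ∀ t : ℝ, ρ t = NormedSpace.exp ((t : ℂ) • ((-Complex.I) • H)) * ρ₀ *
      NormedSpace.exp ((t : ℂ) • (Complex.I • H)) := by
    intro t; rw [hρ t, hUH t, hU' t]
  constructor
  · rw [hρ' 0]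
    simp
  · intro t
    have key := aux_deriv_slope ((-Complex.I) • H) (Complex.I • H) ρ₀ t
    refine hasDerivAt_iff_tendsto_slope.mpr ?_
    have hfun : (fun s : ℝ => NormedSpace.exp ((s : ℂ) • ((-Complex.I) • H)) * ρ₀ *
        NormedSpace.exp ((s : ℂ) • (Complex.I • H))) = ρ := by
      funext s; rw [hρ' s]
    rw [hfun] at key
    rw [hρ' t]
    have heq : ∀ X : Matrix n n ℂ, (-Complex.I) • (H * X - X * H) =
        (-Complex.I) • H * X + X * (Complex.I • H) := by
      intro X
      rw [Matrix.smul_mul, Matrix.mul_smul, smul_sub]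
      module
    rw [heq]
    exact key
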